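/- Let 0<α₀<α₁<α₂ and take parameters (α₀,α₁,α₂,α₃)=(α₀,α₁,α₂,α₂). Define J=x₂y₃−x₃y₂ and G=y₂²+y₃²+(x₀y₂−x₂y₀)²/(α₂−α₀)+(x₀y₃−x₃y₀)²/(α₂−α₀)+(x₁y₂−x₂y₁)²/(α₂−α₁)+(x₁y₃−x₃y₁)²/(α₂−α₁). Then for every point (x,y)∈ℝ⁴×ℝ⁴ with C₁(x)=0 and C₂(x,y)=0, the Dirac brackets {H,J}, {H,G} and {J,G} all vanish at (x,y), where H=½(y₀²+y₁²+y₂²+y₃²). -/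

import Mathlib

noncomputable section

/-- Points of `T*ℝⁿ = ℝⁿ × ℝⁿ`, written `(x, y)`. -/
abbrev Pt (n : ℕ) := (Fin n → ℝ) × (Fin n → ℝ)

/-- `D(x) = Σᵢ xᵢ²/αᵢ²`. -/
def Dq {n : ℕ} (α : Fin n → ℝ) (x : Fin n → ℝ) : ℝ := ∑ i, (x i)^2 / (α i)^2

/-- Partial derivative of `f` in the direction `xᵢ`. -/
def pdx {n : ℕ} (f : Pt n → ℝ) (p : Pt n) (i : Fin n) : ℝ :=
  fderiv ℝ f p (Pi.single i 1, 0)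

/-- Partial derivative of `f` in the direction `yᵢ`. -/
def pdy {n : ℕ} (f : Pt n → ℝ) (p : Pt n) (i : Fin n) : ℝ :=
  fderiv ℝ f p (0, Pi.single i 1)

/-- The Dirac bracket on `T*ℝⁿ` for the ellipsoid with semi-axes `√(αᵢ)`:
`{f,g} = Σᵢₖ (∂f/∂xᵢ ∂g/∂yₖ − ∂g/∂xᵢ ∂f/∂yₖ)(δᵢₖ − xᵢxₖ/(D αᵢ αₖ))
        − Σᵢₖ (∂f/∂yᵢ)(∂g/∂yₖ)(xᵢyₖ − xₖyᵢ)/(D αᵢ αₖ)`. -/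
def dirac {n : ℕ} (α : Fin n → ℝ) (f g : Pt n → ℝ) (p : Pt n) : ℝ :=
  (∑ i, ∑ k,
    (pdx f p i * pdy g p k - pdx g p i * pdy f p k) *
      ((if i = k then (1:ℝ) else 0) - p.1 i * p.1 k / (Dq α p.1 * α i * α k)))
  - ∑ i, ∑ k,
      pdy f p i * pdy g p k * (p.1 i * p.2 k - p.1 k * p.2 i) / (Dq α p.1 * α i * α k)

/-- The constraint `C₁(x) = Σᵢ xᵢ²/αᵢ − 1`. -/
def C1 {n : ℕ} (α : Fin n → ℝ) (x : Fin n → ℝ) : ℝ := (∑ i, (x i)^2 / α i) - 1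

/-- The constraint `C₂(x,y) = Σᵢ xᵢyᵢ/αᵢ`. -/
def C2 {n : ℕ} (α : Fin n → ℝ) (p : Pt n) : ℝ := ∑ i, p.1 i * p.2 i / α i

/-- The Hamiltonian `H = ½(y₀² + y₁² + y₂² + y₃²)`. -/
def H4 (p : Pt 4) : ℝ := (1/2) * ((p.2 0)^2 + (p.2 1)^2 + (p.2 2)^2 + (p.2 3)^2)

/-- The angular momentum `J₁ = x₀y₁ − x₁y₀`. -/
def Jmom1 (p : Pt 4) : ℝ := p.1 0 * p.2 1 - p.1 1 * p.2 0

/-- The angular momentum `J₂ = x₂y₃ − x₃y₂`. -/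
def Jmom2 (p : Pt 4) : ℝ := p.1 2 * p.2 3 - p.1 3 * p.2 2
/-- The integral `G = F₂ + F₃` of the 112 case:
`G = y₂² + y₃² + (x₀y₂−x₂y₀)²/(α₂−α₀) + (x₀y₃−x₃y₀)²/(α₂−α₀)
   + (x₁y₂−x₂y₁)²/(α₂−α₁) + (x₁y₃−x₃y₁)²/(α₂−α₁)`. -/
def G112 (α₀ α₁ α₂ : ℝ) (p : Pt 4) : ℝ :=
  (p.2 2)^2 + (p.2 3)^2
  + (p.1 0 * p.2 2 - p.1 2 * p.2 0)^2 / (α₂ - α₀)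
  + (p.1 0 * p.2 3 - p.1 3 * p.2 0)^2 / (α₂ - α₀)
  + (p.1 1 * p.2 2 - p.1 2 * p.2 1)^2 / (α₂ - α₁)
  + (p.1 1 * p.2 3 - p.1 3 * p.2 1)^2 / (α₂ - α₁)

open ContinuousLinearMap in
lemma hasFDerivAt_coord_x {n : ℕ} (p : Pt n) (i : Fin n) :
    HasFDerivAt (fun q : Pt n => q.1 i)
      ((proj i).comp (fst ℝ (Fin n → ℝ) (Fin n → ℝ))) p :=
  ((proj i).comp (fst ℝ (Fin n → ℝ) (Fin n → ℝ))).hasFDerivAt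

open ContinuousLinearMap in
lemma hasFDerivAt_coord_y {n : ℕ} (p : Pt n) (i : Fin n) :
    HasFDerivAt (fun q : Pt n => q.2 i)
      ((proj i).comp (snd ℝ (Fin n → ℝ) (Fin n → ℝ))) p :=
  ((proj i).comp (snd ℝ (Fin n → ℝ) (Fin n → ℝ))).hasFDerivAt

lemma fderiv_H4_apply (p v : Pt 4) :
    fderiv ℝ H4 p v = p.2 0 * v.2 0 + p.2 1 * v.2 1 + p.2 2 * v.2 2 + p.2 3 * v.2 3 := by
  have e : H4 = fun q : Pt 4 =>
      (1/2:ℝ) * (q.2 0 * q.2 0 + q.2 1 * q.2 1 + q.2 2 * q.2 2 + q.2 3 * q.2 3) := by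
    funext q; simp only [H4]; ring
  rw [e]
  have h : HasFDerivAt (fun q : Pt 4 =>
      (1/2:ℝ) * (q.2 0 * q.2 0 + q.2 1 * q.2 1 + q.2 2 * q.2 2 + q.2 3 * q.2 3)) _ p :=
    (((((hasFDerivAt_coord_y p 0).mul (hasFDerivAt_coord_y p 0)).add
      ((hasFDerivAt_coord_y p 1).mul (hasFDerivAt_coord_y p 1))).add
      ((hasFDerivAt_coord_y p 2).mul (hasFDerivAt_coord_y p 2))).add
      ((hasFDerivAt_coord_y p 3).mul (hasFDerivAt_coord_y p 3))).const_mul (1/2)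
  rw [h.fderiv]
  simp [ContinuousLinearMap.proj_apply]
  ring

lemma fderiv_J2_apply (p v : Pt 4) :
    fderiv ℝ Jmom2 p v = v.1 2 * p.2 3 + p.1 2 * v.2 3 - (v.1 3 * p.2 2 + p.1 3 * v.2 2) := by
  have h : HasFDerivAt Jmom2 _ p :=
    ((hasFDerivAt_coord_x p 2).mul (hasFDerivAt_coord_y p 3)).sub
      ((hasFDerivAt_coord_x p 3).mul (hasFDerivAt_coord_y p 2))
  rw [h.fderiv]
  simp [ContinuousLinearMap.proj_apply]
  ring

lemma fderiv_G112_apply (α₀ α₁ α₂ : ℝ) (p v : Pt 4) :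
    fderiv ℝ (G112 α₀ α₁ α₂) p v =
      2 * p.2 2 * v.2 2 + 2 * p.2 3 * v.2 3
      + 2 * (p.1 0 * p.2 2 - p.1 2 * p.2 0) *
          (v.1 0 * p.2 2 + p.1 0 * v.2 2 - v.1 2 * p.2 0 - p.1 2 * v.2 0) / (α₂ - α₀)
      + 2 * (p.1 0 * p.2 3 - p.1 3 * p.2 0) *
          (v.1 0 * p.2 3 + p.1 0 * v.2 3 - v.1 3 * p.2 0 - p.1 3 * v.2 0) / (α₂ - α₀)
      + 2 * (p.1 1 * p.2 2 - p.1 2 * p.2 1) *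
          (v.1 1 * p.2 2 + p.1 1 * v.2 2 - v.1 2 * p.2 1 - p.1 2 * v.2 1) / (α₂ - α₁)
      + 2 * (p.1 1 * p.2 3 - p.1 3 * p.2 1) *
          (v.1 1 * p.2 3 + p.1 1 * v.2 3 - v.1 3 * p.2 1 - p.1 3 * v.2 1) / (α₂ - α₁) := by
  have e : G112 α₀ α₁ α₂ = fun q : Pt 4 =>
      q.2 2 * q.2 2 + q.2 3 * q.2 3
      + (α₂ - α₀)⁻¹ * ((q.1 0 * q.2 2 - q.1 2 * q.2 0) * (q.1 0 * q.2 2 - q.1 2 * q.2 0))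
      + (α₂ - α₀)⁻¹ * ((q.1 0 * q.2 3 - q.1 3 * q.2 0) * (q.1 0 * q.2 3 - q.1 3 * q.2 0))
      + (α₂ - α₁)⁻¹ * ((q.1 1 * q.2 2 - q.1 2 * q.2 1) * (q.1 1 * q.2 2 - q.1 2 * q.2 1))
      + (α₂ - α₁)⁻¹ * ((q.1 1 * q.2 3 - q.1 3 * q.2 1) * (q.1 1 * q.2 3 - q.1 3 * q.2 1)) := by
    funext q; simp only [G112]; ring
  rw [e]
  have hw02 := ((hasFDerivAt_coord_x p 0).mul (hasFDerivAt_coord_y p 2)).sub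
      ((hasFDerivAt_coord_x p 2).mul (hasFDerivAt_coord_y p 0))
  have hw03 := ((hasFDerivAt_coord_x p 0).mul (hasFDerivAt_coord_y p 3)).sub
      ((hasFDerivAt_coord_x p 3).mul (hasFDerivAt_coord_y p 0))
  have hw12 := ((hasFDerivAt_coord_x p 1).mul (hasFDerivAt_coord_y p 2)).sub
      ((hasFDerivAt_coord_x p 2).mul (hasFDerivAt_coord_y p 1))
  have hw13 := ((hasFDerivAt_coord_x p 1).mul (hasFDerivAt_coord_y p 3)).sub
      ((hasFDerivAt_coord_x p 3).mul (hasFDerivAt_coord_y p 1))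
  have h : HasFDerivAt (fun q : Pt 4 =>
      q.2 2 * q.2 2 + q.2 3 * q.2 3
      + (α₂ - α₀)⁻¹ * ((q.1 0 * q.2 2 - q.1 2 * q.2 0) * (q.1 0 * q.2 2 - q.1 2 * q.2 0))
      + (α₂ - α₀)⁻¹ * ((q.1 0 * q.2 3 - q.1 3 * q.2 0) * (q.1 0 * q.2 3 - q.1 3 * q.2 0))
      + (α₂ - α₁)⁻¹ * ((q.1 1 * q.2 2 - q.1 2 * q.2 1) * (q.1 1 * q.2 2 - q.1 2 * q.2 1))
      + (α₂ - α₁)⁻¹ * ((q.1 1 * q.2 3 - q.1 3 * q.2 1) * (q.1 1 * q.2 3 - q.1 3 * q.2 1))) _ p :=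
    ((((((hasFDerivAt_coord_y p 2).mul (hasFDerivAt_coord_y p 2)).add
      ((hasFDerivAt_coord_y p 3).mul (hasFDerivAt_coord_y p 3))).add
      ((hw02.mul hw02).const_mul (α₂ - α₀)⁻¹)).add
      ((hw03.mul hw03).const_mul (α₂ - α₀)⁻¹)).add
      ((hw12.mul hw12).const_mul (α₂ - α₁)⁻¹)).add
      ((hw13.mul hw13).const_mul (α₂ - α₁)⁻¹)
  rw [h.fderiv]
  simp [ContinuousLinearMap.proj_apply]
  field_simp
  ring


set_option maxHeartbeats 1000000 in
lemma dirac_eq4 (α : Fin 4 → ℝ) (f g : Pt 4 → ℝ) (p : Pt 4)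
    (h0 : α 0 ≠ 0) (h1 : α 1 ≠ 0) (h2 : α 2 ≠ 0) (h3 : α 3 ≠ 0)
    (hD : Dq α p.1 ≠ 0) :
    dirac α f g p =
      ((pdx f p 0 * pdy g p 0 - pdx g p 0 * pdy f p 0)
        + (pdx f p 1 * pdy g p 1 - pdx g p 1 * pdy f p 1)
        + (pdx f p 2 * pdy g p 2 - pdx g p 2 * pdy f p 2)
        + (pdx f p 3 * pdy g p 3 - pdx g p 3 * pdy f p 3))
      - ((pdx f p 0 * p.1 0 / α 0 + pdx f p 1 * p.1 1 / α 1
            + pdx f p 2 * p.1 2 / α 2 + pdx f p 3 * p.1 3 / α 3)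
          * (pdy g p 0 * p.1 0 / α 0 + pdy g p 1 * p.1 1 / α 1
            + pdy g p 2 * p.1 2 / α 2 + pdy g p 3 * p.1 3 / α 3)
         - (pdx g p 0 * p.1 0 / α 0 + pdx g p 1 * p.1 1 / α 1
            + pdx g p 2 * p.1 2 / α 2 + pdx g p 3 * p.1 3 / α 3)
          * (pdy f p 0 * p.1 0 / α 0 + pdy f p 1 * p.1 1 / α 1
            + pdy f p 2 * p.1 2 / α 2 + pdy f p 3 * p.1 3 / α 3)) / Dq α p.1
      - ((pdy f p 0 * p.1 0 / α 0 + pdy f p 1 * p.1 1 / α 1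
            + pdy f p 2 * p.1 2 / α 2 + pdy f p 3 * p.1 3 / α 3)
          * (pdy g p 0 * p.2 0 / α 0 + pdy g p 1 * p.2 1 / α 1
            + pdy g p 2 * p.2 2 / α 2 + pdy g p 3 * p.2 3 / α 3)
         - (pdy f p 0 * p.2 0 / α 0 + pdy f p 1 * p.2 1 / α 1
            + pdy f p 2 * p.2 2 / α 2 + pdy f p 3 * p.2 3 / α 3)
          * (pdy g p 0 * p.1 0 / α 0 + pdy g p 1 * p.1 1 / α 1
            + pdy g p 2 * p.1 2 / α 2 + pdy g p 3 * p.1 3 / α 3)) / Dq α p.1 := by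
  simp only [dirac, Fin.sum_univ_four, Fin.reduceEq, reduceIte]
  field_simp
  ring


lemma dirac_zero4 (α : Fin 4 → ℝ) (f g : Pt 4 → ℝ) (p : Pt 4)
    (h0 : α 0 ≠ 0) (h1 : α 1 ≠ 0) (h2 : α 2 ≠ 0) (h3 : α 3 ≠ 0)
    (hD : Dq α p.1 ≠ 0)
    (hcan : (pdx f p 0 * pdy g p 0 - pdx g p 0 * pdy f p 0)
        + (pdx f p 1 * pdy g p 1 - pdx g p 1 * pdy f p 1)
        + (pdx f p 2 * pdy g p 2 - pdx g p 2 * pdy f p 2)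
        + (pdx f p 3 * pdy g p 3 - pdx g p 3 * pdy f p 3) = 0)
    (hBf : pdy f p 0 * p.1 0 / α 0 + pdy f p 1 * p.1 1 / α 1
            + pdy f p 2 * p.1 2 / α 2 + pdy f p 3 * p.1 3 / α 3 = 0)
    (hBg : pdy g p 0 * p.1 0 / α 0 + pdy g p 1 * p.1 1 / α 1
            + pdy g p 2 * p.1 2 / α 2 + pdy g p 3 * p.1 3 / α 3 = 0) :
    dirac α f g p = 0 := by
  rw [dirac_eq4 α f g p h0 h1 h2 h3 hD, hcan, hBf, hBg]
  ring

set_option maxHeartbeats 2000000 in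
/-- on the constraint set of the 112-ellipsoid (parameters
`(α₀,α₁,α₂,α₂)`), the Dirac brackets `{H,J}`, `{H,G}`, `{J,G}` all vanish,
where `J = x₂y₃ − x₃y₂`. -/
theorem stmt9 (α₀ α₁ α₂ : ℝ) (hα₀ : 0 < α₀) (hα₀₁ : α₀ < α₁) (hα₁₂ : α₁ < α₂)
    (p : Pt 4)
    (hC1 : C1 ![α₀, α₁, α₂, α₂] p.1 = 0)
    (hC2 : C2 ![α₀, α₁, α₂, α₂] p = 0) :
    dirac ![α₀, α₁, α₂, α₂] H4 Jmom2 p = 0 ∧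
    dirac ![α₀, α₁, α₂, α₂] H4 (G112 α₀ α₁ α₂) p = 0 ∧
    dirac ![α₀, α₁, α₂, α₂] Jmom2 (G112 α₀ α₁ α₂) p = 0 := by
  have hα₁ : (0:ℝ) < α₁ := hα₀.trans hα₀₁
  have hα₂ : (0:ℝ) < α₂ := hα₁.trans hα₁₂
  have hα₀' : α₀ ≠ 0 := hα₀.ne'
  have hα₁' : α₁ ≠ 0 := hα₁.ne'
  have hα₂' : α₂ ≠ 0 := hα₂.ne'
  have h20 : α₂ - α₀ ≠ 0 := sub_ne_zero.mpr (by linarith)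
  have h21 : α₂ - α₁ ≠ 0 := sub_ne_zero.mpr (by linarith)
  have hC1e : p.1 0^2/α₀ + p.1 1^2/α₁ + p.1 2^2/α₂ + p.1 3^2/α₂ = 1 := by
    have h := hC1
    simp [C1, Fin.sum_univ_four] at h
    linarith
  have hC2e : p.1 0 * p.2 0/α₀ + p.1 1 * p.2 1/α₁ + p.1 2 * p.2 2/α₂ + p.1 3 * p.2 3/α₂ = 0 := by
    have h := hC2
    simp [C2, Fin.sum_univ_four] at h
    linarith
  have hDq : Dq ![α₀, α₁, α₂, α₂] p.1
      = p.1 0^2/α₀^2 + p.1 1^2/α₁^2 + p.1 2^2/α₂^2 + p.1 3^2/α₂^2 := by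
    simp [Dq, Fin.sum_univ_four]
  have l0 : p.1 0^2/α₀/α₂ ≤ p.1 0^2/α₀^2 := by
    rw [div_div]
    gcongr <;> nlinarith [sq_nonneg (p.1 0)]
  have l1 : p.1 1^2/α₁/α₂ ≤ p.1 1^2/α₁^2 := by
    rw [div_div]
    gcongr <;> nlinarith [sq_nonneg (p.1 1)]
  have l2 : p.1 2^2/α₂/α₂ ≤ p.1 2^2/α₂^2 := by rw [div_div, ← sq]
  have l3 : p.1 3^2/α₂/α₂ ≤ p.1 3^2/α₂^2 := by rw [div_div, ← sq]
  have hsum : p.1 0^2/α₀/α₂ + p.1 1^2/α₁/α₂ + p.1 2^2/α₂/α₂ + p.1 3^2/α₂/α₂ = 1/α₂ := by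
    rw [← add_div, ← add_div, ← add_div, hC1e]
  have hDpos : 0 < Dq ![α₀, α₁, α₂, α₂] p.1 := by
    rw [hDq]
    have : (0:ℝ) < 1/α₂ := by positivity
    linarith
  have hD : Dq ![α₀, α₁, α₂, α₂] p.1 ≠ 0 := hDpos.ne'
  have hv0 : (![α₀, α₁, α₂, α₂] : Fin 4 → ℝ) 0 ≠ 0 := by simpa using hα₀'
  have hv1 : (![α₀, α₁, α₂, α₂] : Fin 4 → ℝ) 1 ≠ 0 := by simpa using hα₁'
  have hv2 : (![α₀, α₁, α₂, α₂] : Fin 4 → ℝ) 2 ≠ 0 := by simpa using hα₂'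
  have hv3 : (![α₀, α₁, α₂, α₂] : Fin 4 → ℝ) 3 ≠ 0 := by simpa using hα₂'
  refine ⟨?_, ?_, ?_⟩
  · refine dirac_zero4 _ _ _ _ hv0 hv1 hv2 hv3 hD ?_ ?_ ?_
    · simp only [pdx, pdy, fderiv_H4_apply, fderiv_J2_apply]
      simp [Pi.single_apply, Fin.reduceEq]
      ring
    · simp only [pdy, fderiv_H4_apply]
      simp [Pi.single_apply, Fin.reduceEq]
      linear_combination (norm := (field_simp; ring)) hC2e
    · simp only [pdy, fderiv_J2_apply]
      simp [Pi.single_apply, Fin.reduceEq]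
      ring
  · refine dirac_zero4 _ _ _ _ hv0 hv1 hv2 hv3 hD ?_ ?_ ?_
    · simp only [pdx, pdy, fderiv_H4_apply, fderiv_G112_apply]
      simp [Pi.single_apply, Fin.reduceEq]
      field_simp
      ring
    · simp only [pdy, fderiv_H4_apply]
      simp [Pi.single_apply, Fin.reduceEq]
      linear_combination (norm := (field_simp; ring)) hC2e
    · simp only [pdy, fderiv_G112_apply]
      simp [Pi.single_apply, Fin.reduceEq]
      linear_combination (norm := (field_simp; ring))
        (2*((p.1 2)^2+(p.1 3)^2)/α₂) * hC2e - (2*(p.1 2*p.2 2 + p.1 3*p.2 3)/α₂) * hC1e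
  · refine dirac_zero4 _ _ _ _ hv0 hv1 hv2 hv3 hD ?_ ?_ ?_
    · simp only [pdx, pdy, fderiv_J2_apply, fderiv_G112_apply]
      simp [Pi.single_apply, Fin.reduceEq]
      field_simp
      ring
    · simp only [pdy, fderiv_J2_apply]
      simp [Pi.single_apply, Fin.reduceEq]
      ring
    · simp only [pdy, fderiv_G112_apply]
      simp [Pi.single_apply, Fin.reduceEq]
      linear_combination (norm := (field_simp; ring))
        (2*((p.1 2)^2+(p.1 3)^2)/α₂) * hC2e - (2*(p.1 2*p.2 2 + p.1 3*p.2 3)/α₂) * hC1e
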